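/- Let b_1, ..., b_n be linearly independent vectors in R^n with B_i = ‖b_i*‖², let π_j be the orthogonal projection onto the orthogonal complement of span{b_1, ..., b_{j−1}}, and define Pot(B) = ∏_{i=1}^n B_i^{n−i+1}. Then for all 1 ≤ i < k ≤ n, Pot(σ_{i,k}(B)) = Pot(B) · ∏_{j=i}^{k−1} ‖π_j(b_k)‖² / B_j, where σ_{i,k}(B) = (b_1, ..., b_{i−1}, b_k, b_i, ..., b_{k−1}, b_{k+1}, ..., b_n). -/

import Mathlib

/-- Helper instance (provable; works around an instance-resolution hiccup). -/
instance (n : ℕ) : WellFoundedLT (Fin n) := inferInstance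

open Finset Matrix InnerProductSpace

section Aux
variable {E : Type*} [NormedAddCommGroup E] [InnerProductSpace ℝ E]
local notation "⟪" x ", " y "⟫" => @inner ℝ _ _ x y
-- (aux lemmas pasted here)
lemma gs_congr {N : ℕ} {f g : Fin N → E} (i : Fin N) (h : ∀ j ≤ i, f j = g j) :
    gramSchmidt ℝ f i = gramSchmidt ℝ g i := by
  induction i using WellFoundedLT.induction with
  | ind i IH =>
    rw [gramSchmidt_def, gramSchmidt_def, h i le_rfl]
    congr 1
    refine Finset.sum_congr rfl fun j hj => ?_
    rw [Finset.mem_Iio] at hj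
    rw [IH j hj (fun l hl => h l (hl.trans hj.le))]

lemma gs_castLE {M N : ℕ} (h : M ≤ N) (f : Fin N → E) (i : Fin M) :
    gramSchmidt ℝ (f ∘ Fin.castLE h) i = gramSchmidt ℝ f (Fin.castLE h i) := by
  induction i using WellFoundedLT.induction with
  | ind i IH =>
    rw [gramSchmidt_def, gramSchmidt_def]
    have hIio : Finset.Iio (Fin.castLE h i) =
        (Finset.Iio i).map ⟨Fin.castLE h, Fin.castLE_injective h⟩ := by
      ext a
      simp only [Finset.mem_Iio, Finset.mem_map, Function.Embedding.coeFn_mk]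
      constructor
      · intro ha
        refine ⟨⟨(a : ℕ), lt_trans ha i.isLt⟩, ha, by ext; rfl⟩
      · rintro ⟨x, hx, rfl⟩
        exact hx
    rw [hIio, Finset.sum_map]
    simp only [Function.Embedding.coeFn_mk]
    congr 1
    refine Finset.sum_congr rfl fun j hj => ?_
    rw [Finset.mem_Iio] at hj
    rw [IH j hj]
    rfl

lemma gs_proj [FiniteDimensional ℝ E] {N : ℕ} (f : Fin N → E) (i : Fin N) :
    ((Submodule.orthogonalProjectionOnto (Submodule.span ℝ (f '' Set.Iio i))ᗮ (f i)) : E) =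
      gramSchmidt ℝ f i := by
  rw [Submodule.coe_orthogonalProjectionOnto_apply]
  apply Submodule.eq_starProjection_of_mem_orthogonal'
    (z := f i - gramSchmidt ℝ f i)
  · rw [Submodule.mem_orthogonal]
    intro u hu
    induction hu using Submodule.span_induction with
    | mem x hx =>
      obtain ⟨j, hj, rfl⟩ := hx
      rw [real_inner_comm]
      exact gramSchmidt_inv_triangular ℝ f hj
    | zero => simp
    | add x y _ _ hx hy => rw [inner_add_left, hx, hy, add_zero]
    | smul a x _ hx => rw [inner_smul_left, hx, mul_zero]
  · rw [Submodule.orthogonal_orthogonal]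
    have hsub : f i - gramSchmidt ℝ f i =
        ∑ j ∈ Finset.Iio i, ((Submodule.orthogonalProjectionOnto (ℝ ∙ gramSchmidt ℝ f j) (f i)) : E) := by
      rw [gramSchmidt_def ℝ f i]; simp only [Submodule.coe_orthogonalProjectionOnto_apply]; abel
    rw [hsub]
    refine Submodule.sum_mem _ fun j hj => ?_
    rw [Finset.mem_Iio] at hj
    have h1 : (ℝ ∙ gramSchmidt ℝ f j) ≤ Submodule.span ℝ (f '' Set.Iio i) := by
      rw [Submodule.span_singleton_le_iff_mem, ← span_gramSchmidt_Iio ℝ f i]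
      exact Submodule.subset_span ⟨j, hj, rfl⟩
    exact h1 (SetLike.coe_mem _)
  · abel

noncomputable def Gdet {m : ℕ} (f : Fin m → E) : ℝ :=
  (Matrix.of fun i j => (⟪f i, f j⟫ : ℝ)).det

lemma Gdet_perm {m : ℕ} (f : Fin m → E) (e : Equiv.Perm (Fin m)) :
    Gdet (f ∘ e) = Gdet f := by
  have : (Matrix.of fun i j => (⟪(f ∘ e) i, (f ∘ e) j⟫ : ℝ)) =
      (Matrix.of fun i j => (⟪f i, f j⟫ : ℝ)).submatrix e e := rfl
  rw [Gdet, this, Matrix.det_submatrix_equiv_self, Gdet]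

lemma Gdet_eq_prod {m : ℕ} (f : Fin m → E) :
    Gdet f = ∏ i : Fin m, ‖gramSchmidt ℝ f i‖ ^ 2 := by
  classical
  set g : Fin m → E := gramSchmidt ℝ f with hg
  set L : Matrix (Fin m) (Fin m) ℝ :=
    Matrix.of (fun i j => if j = i then 1 else
      if j < i then (⟪g j, f i⟫ : ℝ) / ‖g j‖ ^ 2 else 0) with hL
  have hf : ∀ i, f i = ∑ j : Fin m, L i j • g j := by
    intro i
    have hd := gramSchmidt_def'' ℝ f i
    rw [hd]
    rw [← Finset.sum_subset (Finset.subset_univ (Finset.Iic i))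
      (by
        intro j _ hj
        rw [Finset.mem_Iic, not_le] at hj
        have h1 : ¬ (j = i) := fun h => absurd h.le (not_le.2 hj)
        have h2 : ¬ (j < i) := not_lt.2 hj.le
        simp [hL, h1, h2])]
    rw [← Finset.Iio_insert, Finset.sum_insert (by simp)]
    congr 1
    · simp [hL, hg]
    · refine Finset.sum_congr rfl fun j hj => ?_
      rw [Finset.mem_Iio] at hj
      simp [hL, hj.ne, hj, hg]
  have key : (Matrix.of fun i j => (⟪f i, f j⟫ : ℝ)) =
      L * Matrix.diagonal (fun j => ‖g j‖ ^ 2) * Lᵀ := by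
    ext i j
    rw [Matrix.mul_assoc, Matrix.mul_apply]
    have hrhs : ∀ q : Fin m, (Matrix.diagonal (fun p => ‖g p‖ ^ 2) * Lᵀ) q j
        = ‖g q‖ ^ 2 * L j q := by
      intro q
      rw [Matrix.diagonal_mul, Matrix.transpose_apply]
    simp only [Matrix.of_apply, hrhs]
    rw [hf i, hf j, sum_inner]
    refine Finset.sum_congr rfl fun q _ => ?_
    rw [inner_sum]
    rw [Finset.sum_eq_single q]
    · rw [real_inner_smul_left, real_inner_smul_right, real_inner_self_eq_norm_sq]
      ring
    · intro p _ hp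
      rw [real_inner_smul_left, real_inner_smul_right,
        gramSchmidt_orthogonal ℝ f (Ne.symm hp)]
      ring
    · intro h; exact absurd (Finset.mem_univ q) h
  have hLdet : L.det = 1 := by
    have htri : L.BlockTriangular OrderDual.toDual := by
      intro i j hij
      have h1 : i < j := hij
      simp [hL, h1.ne', not_lt.2 h1.le]
    rw [Matrix.det_of_lowerTriangular L htri]
    refine Finset.prod_eq_one fun i _ => by simp [hL]
  rw [Gdet, key, Matrix.det_mul, Matrix.det_mul, Matrix.det_transpose, hLdet,
    Matrix.det_diagonal]
  ring

def cycFun {m : ℕ} (r t : Fin m) : Fin m → Fin m := fun i =>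
  if (i : ℕ) = (r : ℕ) then t
  else if (r : ℕ) < (i : ℕ) ∧ (i : ℕ) ≤ (t : ℕ) then
    ⟨(i : ℕ) - 1, lt_of_le_of_lt (Nat.sub_le _ _) i.isLt⟩
  else i

lemma cycFun_inj {m : ℕ} (r t : Fin m) (h : (r : ℕ) ≤ (t : ℕ)) :
    Function.Injective (cycFun r t) := by
  intro i j hij
  have h2 : ((cycFun r t i : Fin m) : ℕ) = ((cycFun r t j : Fin m) : ℕ) := by rw [hij]
  simp only [cycFun, apply_ite (Fin.val : Fin m → ℕ)] at h2
  have hi := i.isLt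
  have hj := j.isLt
  have ht := t.isLt
  apply Fin.ext
  split_ifs at h2 <;> omega

noncomputable def cyc {m : ℕ} (r t : Fin m) (h : (r : ℕ) ≤ (t : ℕ)) : Equiv.Perm (Fin m) :=
  Equiv.ofBijective (cycFun r t) (Finite.injective_iff_bijective.1 (cycFun_inj r t h))

lemma cyc_apply {m : ℕ} (r t : Fin m) (h : (r : ℕ) ≤ (t : ℕ)) (i : Fin m) :
    cyc r t h i = cycFun r t i := rfl

lemma pot_eq {N : ℕ} (a : Fin N → ℝ) :
    ∏ i : Fin N, (a i) ^ (N - (i : ℕ)) = ∏ m : Fin N, ∏ i ∈ Finset.Iic m, a i := by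
  rw [Finset.prod_comm' (t' := Finset.univ) (s' := fun i => Finset.Ici i)
    (by intro x y; simp [Finset.mem_Iic, Finset.mem_Ici])]
  refine Finset.prod_congr rfl fun i _ => ?_
  rw [Finset.prod_const, Fin.card_Ici]

lemma Gdet_Iic {N : ℕ} (f : Fin N → E) (m : Fin N) :
    Gdet (f ∘ Fin.castLE (Nat.succ_le_of_lt m.isLt)) =
      ∏ i ∈ Finset.Iic m, ‖gramSchmidt ℝ f i‖ ^ 2 := by
  rw [Gdet_eq_prod]
  have he : Finset.Iic m = Finset.univ.map
      ⟨Fin.castLE (Nat.succ_le_of_lt m.isLt), Fin.castLE_injective _⟩ := by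
    ext a
    simp only [Finset.mem_Iic, Finset.mem_map, Finset.mem_univ, true_and,
      Function.Embedding.coeFn_mk]
    constructor
    · intro ha
      exact ⟨⟨(a : ℕ), by omega⟩, by ext; rfl⟩
    · rintro ⟨x, rfl⟩
      have := x.isLt
      exact Fin.le_def.2 (by simpa using Nat.lt_succ_iff.1 this)
  rw [he, Finset.prod_map]
  refine Finset.prod_congr rfl fun i _ => ?_
  rw [gs_castLE]
  rfl

end Aux

/-- Let `b 1, ..., b n` be linearly independent vectors in `ℝ^n` with
`B i = ‖bᵢ*‖²`, let `π j` be the orthogonal projection onto the orthogonal complement of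
`span {b t : t < j}`, and define `Pot(f) = ∏ i, ‖fᵢ*‖² ^ (n − i + 1)` (with `0`-indexed
exponent `n − i`). Then for `ρ < k`, with `c = σ_{ρ,k}(b)` the deep-insertion permutation
(`c ρ = b k`, `c i = b (i−1)` for `ρ < i ≤ k`, `c i = b i` otherwise),
`Pot(c) = Pot(b) * ∏_{j ∈ [ρ, k)} ‖π j (b k)‖² / B j`. -/
theorem stmt_12 (n : ℕ) (b : Fin n → EuclideanSpace ℝ (Fin n))
    (hb : LinearIndependent ℝ b)
    (B : Fin n → ℝ) (hB : ∀ i, B i = ‖gramSchmidt ℝ b i‖ ^ 2)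
    (ρ k : Fin n) (hρk : ρ < k)
    (c : Fin n → EuclideanSpace ℝ (Fin n))
    (hc : ∀ i : Fin n, c i =
      if i = ρ then b k
      else if ρ < i ∧ i ≤ k then b ⟨(i : ℕ) - 1, lt_of_le_of_lt (Nat.sub_le _ _) i.isLt⟩
      else b i)
    (Pot : (Fin n → EuclideanSpace ℝ (Fin n)) → ℝ)
    (hPot : ∀ f, Pot f = ∏ i : Fin n, (‖gramSchmidt ℝ f i‖ ^ 2) ^ (n - (i : ℕ))) :
    Pot c = Pot b *
      ∏ j ∈ Finset.Ico ρ k,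
        ‖(Submodule.orthogonalProjectionOnto (Submodule.span ℝ (b '' Set.Iio j))ᗮ (b k) :
            EuclideanSpace ℝ (Fin n))‖ ^ 2 / B j := by
  classical
  set A : Fin n → ℝ := fun j =>
    ‖(Submodule.orthogonalProjectionOnto (Submodule.span ℝ (b '' Set.Iio j))ᗮ (b k) :
        EuclideanSpace ℝ (Fin n))‖ ^ 2 with hA
  have hρk' : (ρ : ℕ) < (k : ℕ) := hρk
  have claim : ∀ m : Fin n, (∏ i ∈ Finset.Iic m, ‖gramSchmidt ℝ c i‖ ^ 2) =
      (∏ i ∈ Finset.Iic m, ‖gramSchmidt ℝ b i‖ ^ 2) *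
        (if m ∈ Finset.Ico ρ k then A m / B m else 1) := by
    intro m
    rcases lt_or_ge m ρ with hmρ | hρm
    · -- low range: c agrees with b on Iic m
      rw [if_neg (fun hh => absurd (Finset.mem_Ico.1 hh).1 (not_le.2 hmρ)), mul_one]
      refine Finset.prod_congr rfl fun i hi => ?_
      rw [Finset.mem_Iic] at hi
      have hgs : gramSchmidt ℝ c i = gramSchmidt ℝ b i := by
        refine gs_congr i fun j hj => ?_
        have hjρ : j < ρ := lt_of_le_of_lt (hj.trans hi) hmρ
        rw [hc j, if_neg (Fin.ne_of_lt hjρ),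
          if_neg (fun hh => absurd hh.1 (not_lt.2 hjρ.le))]
      rw [hgs]
    rcases le_or_gt k m with hkm | hmk
    · -- high range: c∘castLE is a permutation of b∘castLE
      rw [if_neg (fun hh => absurd (Finset.mem_Ico.1 hh).2 (not_lt.2 hkm)), mul_one]
      have h1 : (m : ℕ) + 1 ≤ n := Nat.succ_le_of_lt m.isLt
      set r : Fin ((m : ℕ) + 1) := ⟨(ρ : ℕ), by omega⟩ with hr
      set t : Fin ((m : ℕ) + 1) := ⟨(k : ℕ), by omega⟩ with ht
      have hrt : (r : ℕ) ≤ (t : ℕ) := hρk'.le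
      have hcomp : c ∘ Fin.castLE h1 = (b ∘ Fin.castLE h1) ∘ (cyc r t hrt) := by
        funext i
        simp only [Function.comp_apply, cyc_apply, cycFun, hc (Fin.castLE h1 i)]
        by_cases h2 : (i : ℕ) = (ρ : ℕ)
        · rw [if_pos (show Fin.castLE h1 i = ρ from Fin.ext h2), if_pos h2]
          exact congrArg b (Fin.ext rfl)
        · rw [if_neg (show ¬ (Fin.castLE h1 i = ρ) from fun hh => h2 (congrArg Fin.val hh)), if_neg h2]
          by_cases h3 : (ρ : ℕ) < (i : ℕ) ∧ (i : ℕ) ≤ (k : ℕ)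
          · rw [if_pos ⟨Fin.lt_def.2 h3.1, Fin.le_def.2 h3.2⟩, if_pos h3]
            exact congrArg b (Fin.ext rfl)
          · rw [if_neg (show ¬ (ρ < Fin.castLE h1 i ∧ Fin.castLE h1 i ≤ k) from
                fun hh => h3 ⟨Fin.lt_def.1 hh.1, Fin.le_def.1 hh.2⟩), if_neg h3]
      rw [← Gdet_Iic c m, ← Gdet_Iic b m, hcomp, Gdet_perm]
    · -- middle range
      rw [if_pos (Finset.mem_Ico.2 ⟨hρm, hmk⟩)]
      have h1 : (m : ℕ) + 1 ≤ n := Nat.succ_le_of_lt m.isLt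
      have hρm' : (ρ : ℕ) ≤ (m : ℕ) := hρm
      have hmk' : (m : ℕ) < (k : ℕ) := hmk
      set M := (m : ℕ) with hM
      set d : Fin (M + 1) → EuclideanSpace ℝ (Fin n) := fun i =>
        if (i : ℕ) = M then b k else b (Fin.castLE h1 i) with hd
      set r : Fin (M + 1) := ⟨(ρ : ℕ), by omega⟩ with hr
      set t : Fin (M + 1) := Fin.last M with ht
      have hrt : (r : ℕ) ≤ (t : ℕ) := by simp [hr, ht]; omega
      have hcomp : c ∘ Fin.castLE h1 = d ∘ (cyc r t hrt) := by
        funext i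
        have hiM : (i : ℕ) ≤ M := Nat.lt_succ_iff.1 i.isLt
        simp only [Function.comp_apply, cyc_apply, cycFun]; simp only [hc (Fin.castLE h1 i), hd]
        by_cases h2 : (i : ℕ) = (ρ : ℕ)
        · rw [if_pos (show Fin.castLE h1 i = ρ from Fin.ext h2), if_pos h2]
          rw [if_pos (show ((t : Fin (M+1)) : ℕ) = M from rfl)]
        · rw [if_neg (show ¬ (Fin.castLE h1 i = ρ) from fun hh => h2 (congrArg Fin.val hh)), if_neg h2]
          by_cases h3 : (ρ : ℕ) < (i : ℕ) ∧ (i : ℕ) ≤ ((t : Fin (M+1)) : ℕ)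
          · have h4 : (ρ : ℕ) < (i : ℕ) ∧ (i : ℕ) ≤ (k : ℕ) :=
              ⟨h3.1, le_trans hiM hmk'.le⟩
            rw [if_pos ⟨Fin.lt_def.2 h4.1, Fin.le_def.2 h4.2⟩, if_pos h3]
            rw [if_neg (show ¬ ((i : ℕ) - 1 = M) by omega)]
            exact congrArg b (Fin.ext rfl)
          · have h5 : ¬ ((ρ : ℕ) < (i : ℕ)) := by
              intro hh; exact h3 ⟨hh, by simp [ht]; omega⟩
            rw [if_neg (fun hh => h5 (Fin.lt_def.1 hh.1)), if_neg h3]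
            rw [if_neg (show ¬ ((i : ℕ) = M) by omega)]
      have step1 : (∏ i ∈ Finset.Iic m, ‖gramSchmidt ℝ c i‖ ^ 2) = Gdet d := by
        rw [← Gdet_Iic c m, hcomp, Gdet_perm]
      -- compute Gdet d
      have hlast : gramSchmidt ℝ d (Fin.last M) =
          (Submodule.orthogonalProjectionOnto (Submodule.span ℝ (b '' Set.Iio m))ᗮ (b k) : EuclideanSpace ℝ (Fin n)) := by
        rw [← gs_proj d (Fin.last M)]
        have himg : d '' Set.Iio (Fin.last M) = b '' Set.Iio m := by
          ext x
          constructor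
          · rintro ⟨i, hi, rfl⟩
            have hi' : (i : ℕ) < M := hi
            refine ⟨Fin.castLE h1 i, hi', ?_⟩
            rw [hd]; simp only
            rw [if_neg (by omega : ¬ ((i : ℕ) = M))]
          · rintro ⟨j, hj, rfl⟩
            have hj' : (j : ℕ) < M := hj
            refine ⟨⟨(j : ℕ), by omega⟩, hj', ?_⟩
            rw [hd]; simp only
            rw [if_neg (by omega : ¬ ((j : ℕ) = M))]
            exact congrArg b (Fin.ext rfl)
        have hdl : d (Fin.last M) = b k := by
          rw [hd]; simp
        rw [himg, hdl]
      have hinit : ∀ i : Fin M, gramSchmidt ℝ d i.castSucc =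
          gramSchmidt ℝ b (Fin.castLE h1 i.castSucc) := by
        intro i
        rw [show gramSchmidt ℝ d i.castSucc =
            gramSchmidt ℝ (b ∘ Fin.castLE h1) i.castSucc from
          gs_congr _ (fun j hj => by
            have hjM : (j : ℕ) < M := lt_of_le_of_lt hj i.isLt
            rw [hd]; simp only [Function.comp_apply]
            rw [if_neg (by omega : ¬ ((j : ℕ) = M))]), gs_castLE]
      have step2 : Gdet d =
          (∏ i : Fin M, ‖gramSchmidt ℝ b (Fin.castLE h1 i.castSucc)‖ ^ 2) * A m := by
        rw [Gdet_eq_prod, Fin.prod_univ_castSucc]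
        congr 1
        · exact Finset.prod_congr rfl fun i _ => by rw [hinit i]
        · rw [hlast]
      have hIio : (∏ i : Fin M, ‖gramSchmidt ℝ b (Fin.castLE h1 i.castSucc)‖ ^ 2) =
          ∏ i ∈ Finset.Iio m, ‖gramSchmidt ℝ b i‖ ^ 2 := by
        have he : Finset.Iio m = Finset.univ.map
            ⟨fun i : Fin M => Fin.castLE h1 i.castSucc,
             fun i j hij => by
               have h' : ((Fin.castLE h1 i.castSucc : Fin n) : ℕ) =
                   ((Fin.castLE h1 j.castSucc : Fin n) : ℕ) := congrArg Fin.val hij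
               exact Fin.ext h'⟩ := by
          ext a
          simp only [Finset.mem_Iio, Finset.mem_map, Finset.mem_univ, true_and,
            Function.Embedding.coeFn_mk]
          constructor
          · intro ha
            exact ⟨⟨(a : ℕ), ha⟩, Fin.ext rfl⟩
          · rintro ⟨x, rfl⟩
            exact Fin.lt_def.2 x.isLt
        rw [he, Finset.prod_map]
        rfl
      have hBm : B m ≠ 0 := by
        rw [hB m]
        exact pow_ne_zero 2 (norm_ne_zero_iff.2 (gramSchmidt_ne_zero m hb))
      rw [step1, step2, hIio]
      have hIic : (∏ i ∈ Finset.Iic m, ‖gramSchmidt ℝ b i‖ ^ 2) =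
          (∏ i ∈ Finset.Iio m, ‖gramSchmidt ℝ b i‖ ^ 2) * B m := by
        rw [← Finset.Iio_insert, Finset.prod_insert (by simp), hB m]
        ring
      rw [hIic]
      field_simp
  -- assemble
  rw [hPot c, hPot b, pot_eq, pot_eq]
  rw [Finset.prod_congr rfl fun m _ => claim m, Finset.prod_mul_distrib]
  congr 1
  rw [Finset.prod_ite_mem, Finset.univ_inter]
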